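/- arXiv:2212.07117 — 2 statements merged into one kernel-verified Lean document; each statement's English description precedes it below -/
import Mathlib

section
/- Let ρ₁, ρ₂, h₁, h₂ be positive reals with ρ₁ + ρ₂ = 1 and ρ₁/h₁ + ρ₂/h₂ = 1, let δ > 0 and ξ > 0, and define σℓ(ξ) = δ⁻¹ ξ tanh(hℓ δ ξ) for ℓ = 1,2. Then σ₁(ξ)σ₂(ξ)/(ρ₁σ₂(ξ) + ρ₂σ₁(ξ)) ≤ 2ξ². -/
open Real

lemma sinh_le_mul_cosh {x : ℝ} (hx : 0 ≤ x) : Real.sinh x ≤ x * Real.cosh x := by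
  have hmono : MonotoneOn (fun x : ℝ => x * Real.cosh x - Real.sinh x) (Set.Ici 0) := by
    have hderiv : ∀ x : ℝ, HasDerivAt (fun x : ℝ => x * Real.cosh x - Real.sinh x)
        (x * Real.sinh x) x := by
      intro x
      have h1 := ((hasDerivAt_id x).mul (Real.hasDerivAt_cosh x)).sub (Real.hasDerivAt_sinh x)
      exact h1.congr_deriv (by simp only [id_eq]; ring)
    apply monotoneOn_of_deriv_nonneg (convex_Ici 0)
    · exact (Continuous.continuousOn (by continuity))
    · exact fun x _ => ((hderiv x).differentiableAt).differentiableWithinAt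
    · intro x hx
      rw [interior_Ici] at hx
      rw [(hderiv x).deriv]
      exact mul_nonneg (le_of_lt hx) (Real.sinh_nonneg_iff.2 (le_of_lt hx))
  have h0 := hmono (Set.self_mem_Ici) (Set.mem_Ici.2 hx) hx
  simp only [Real.sinh_zero, Real.cosh_zero] at h0
  linarith

lemma tanh_le_self {x : ℝ} (hx : 0 ≤ x) : Real.tanh x ≤ x := by
  rw [Real.tanh_eq_sinh_div_cosh, div_le_iff₀ (Real.cosh_pos x)]
  exact sinh_le_mul_cosh hx

lemma tanh_pos {x : ℝ} (hx : 0 < x) : 0 < Real.tanh x := by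
  rw [Real.tanh_eq_sinh_div_cosh]
  exact div_pos (Real.sinh_pos_iff.2 hx) (Real.cosh_pos x)

theorem stmt5 (ρ₁ ρ₂ h₁ h₂ δ ξ : ℝ) (hρ₁ : 0 < ρ₁) (hρ₂ : 0 < ρ₂)
    (hh₁ : 0 < h₁) (hh₂ : 0 < h₂) (hδ : 0 < δ) (hξ : 0 < ξ)
    (hsum : ρ₁ + ρ₂ = 1) (hdep : ρ₁ / h₁ + ρ₂ / h₂ = 1)
    (σ₁ σ₂ : ℝ)
    (hσ₁ : σ₁ = δ⁻¹ * ξ * Real.tanh (h₁ * δ * ξ))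
    (hσ₂ : σ₂ = δ⁻¹ * ξ * Real.tanh (h₂ * δ * ξ)) :
    σ₁ * σ₂ / (ρ₁ * σ₂ + ρ₂ * σ₁) ≤ 2 * ξ ^ 2 := by
  have hx1 : 0 < h₁ * δ * ξ := by positivity
  have hx2 : 0 < h₂ * δ * ξ := by positivity
  have hσ₁pos : 0 < σ₁ := by
    rw [hσ₁]; have := tanh_pos hx1; positivity
  have hσ₂pos : 0 < σ₂ := by
    rw [hσ₂]; have := tanh_pos hx2; positivity
  have hb1 : σ₁ ≤ h₁ * ξ ^ 2 := by
    rw [hσ₁]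
    have ht := tanh_le_self hx1.le
    have h := mul_le_mul_of_nonneg_left ht (by positivity : (0:ℝ) ≤ δ⁻¹ * ξ)
    calc δ⁻¹ * ξ * Real.tanh (h₁ * δ * ξ) ≤ δ⁻¹ * ξ * (h₁ * δ * ξ) := h
      _ = h₁ * ξ ^ 2 := by field_simp
  have hb2 : σ₂ ≤ h₂ * ξ ^ 2 := by
    rw [hσ₂]
    have ht := tanh_le_self hx2.le
    have h := mul_le_mul_of_nonneg_left ht (by positivity : (0:ℝ) ≤ δ⁻¹ * ξ)
    calc δ⁻¹ * ξ * Real.tanh (h₂ * δ * ξ) ≤ δ⁻¹ * ξ * (h₂ * δ * ξ) := h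
      _ = h₂ * ξ ^ 2 := by field_simp
  have hdep' : ρ₁ * h₂ + ρ₂ * h₁ = h₁ * h₂ := by
    field_simp at hdep; linarith
  have hD : 0 < ρ₁ * σ₂ + ρ₂ * σ₁ := by positivity
  rw [div_le_iff₀ hD]
  nlinarith [mul_le_mul_of_nonneg_left hb1 (mul_pos hρ₁ hσ₂pos).le,
    mul_le_mul_of_nonneg_left hb2 (mul_pos hρ₂ hσ₁pos).le,
    mul_pos hσ₁pos hσ₂pos, sq_nonneg ξ, mul_pos hh₁ hh₂]
end

section
/- Let A be a symmetric positive definite N×N real matrix and l ∈ ℝᴺ a nonzero vector, and suppose the (N+1)×(N+1) block matrix [[0, lᵀ],[−l, A]] is invertible with inverse written in block form [[q, qᵀ_vec],[−q_vec, Q]]. Then q = 1/(lᵀ A⁻¹ l), Q = A⁻¹ − q A⁻¹ l lᵀ A⁻¹, the matrix Q is positive semidefinite, and for every φ ∈ ℝᴺ one has the decomposition φᵀ A φ = q (l·φ)² + (Aφ)ᵀ Q (Aφ). -/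
open Matrix

theorem stmt11 (N : ℕ) (A : Matrix (Fin N) (Fin N) ℝ) (hA : A.PosDef)
    (l : Fin N → ℝ) (hl : l ≠ 0)
    (M : Matrix (Fin 1 ⊕ Fin N) (Fin 1 ⊕ Fin N) ℝ)
    (hM : M = Matrix.fromBlocks (0 : Matrix (Fin 1) (Fin 1) ℝ)
      (Matrix.of fun _ j => l j) (Matrix.of fun i _ => -(l i)) A)
    (hMinv : IsUnit M.det)
    (q : ℝ) (qv : Fin N → ℝ) (Q : Matrix (Fin N) (Fin N) ℝ)
    (hblocks : M⁻¹ = Matrix.fromBlocks (Matrix.of fun _ _ => q)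
      (Matrix.of fun _ j => qv j) (Matrix.of fun i _ => -(qv i)) Q) :
    q = 1 / (l ⬝ᵥ A⁻¹ *ᵥ l) ∧
      Q = A⁻¹ - q • Matrix.vecMulVec (A⁻¹ *ᵥ l) (A⁻¹ *ᵥ l) ∧
      Q.PosSemidef ∧
      ∀ φ : Fin N → ℝ,
        φ ⬝ᵥ A *ᵥ φ = q * (l ⬝ᵥ φ) ^ 2 + (A *ᵥ φ) ⬝ᵥ Q *ᵥ (A *ᵥ φ) := by
  have hAd : IsUnit A.det := hA.det_pos.ne'.isUnit
  have hAs : Aᵀ = A := hA.isHermitian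
  have hAinv : A⁻¹ * A = 1 := Matrix.nonsing_inv_mul A hAd
  have hAinv' : A * A⁻¹ = 1 := Matrix.mul_nonsing_inv A hAd
  have hAis : A⁻¹ᵀ = A⁻¹ := by rw [Matrix.transpose_nonsing_inv, hAs]
  have hsymA : ∀ a b, A a b = A b a := fun a b => (congrFun (congrFun hAs a) b).symm
  have hsymi : ∀ a b, A⁻¹ a b = A⁻¹ b a := fun a b => (congrFun (congrFun hAis a) b).symm
  set v : Fin N → ℝ := A⁻¹ *ᵥ l with hv
  have hAv : A *ᵥ v = l := by rw [hv, Matrix.mulVec_mulVec, hAinv', Matrix.one_mulVec]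
  have hW : ∀ (a b x : Fin N → ℝ), Matrix.vecMulVec a b *ᵥ x = (b ⬝ᵥ x) • a := by
    intro a b x
    funext i
    simp only [Matrix.mulVec, dotProduct, Matrix.vecMulVec_apply, Pi.smul_apply, smul_eq_mul]
    rw [Finset.sum_mul]
    exact Finset.sum_congr rfl fun k _ => by ring
  -- block equations from M⁻¹ * M = 1
  have h := Matrix.nonsing_inv_mul M hMinv
  rw [hblocks, hM, Matrix.fromBlocks_multiply, ← Matrix.fromBlocks_one,
    Matrix.fromBlocks_inj] at h
  obtain ⟨h11, h12, h21, h22⟩ := h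
  -- Q *ᵥ l = 0
  have hQl : Q *ᵥ l = 0 := by
    funext i
    have := congrFun (congrFun h21 i) 0
    simp only [Matrix.add_apply, Matrix.mul_apply, Matrix.of_apply, Matrix.zero_apply,
      mul_zero, Finset.sum_const_zero, zero_add, Matrix.mulVec, dotProduct] at this ⊢
    simp only [mul_neg, ← Finset.sum_neg_distrib] at this
    simpa using neg_eq_zero.mp (by simpa using this)
  -- A *ᵥ qv = -q • l
  have hAqv : A *ᵥ qv = (-q) • l := by
    funext j
    have := congrFun (congrFun h12 0) j
    simp only [Matrix.add_apply, Matrix.mul_apply, Matrix.of_apply, Matrix.zero_apply,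
      Fin.sum_univ_one] at this
    simp only [Matrix.mulVec, dotProduct, Pi.smul_apply, smul_eq_mul]
    calc ∑ k, A j k * qv k = ∑ k, qv k * A k j := by
          refine Finset.sum_congr rfl fun k _ => ?_
          rw [hsymA j k, mul_comm]
      _ = -q * l j := by linarith [this]
  have hqv : qv = (-q) • v := by
    have h0 : A⁻¹ *ᵥ (A *ᵥ qv) = A⁻¹ *ᵥ ((-q) • l) := by rw [hAqv]
    rwa [Matrix.mulVec_mulVec, hAinv, Matrix.one_mulVec, Matrix.mulVec_smul] at h0
  -- Q * A = 1 + vecMulVec qv l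
  have hQA : Q * A = 1 + Matrix.vecMulVec qv l := by
    funext i j
    have := congrFun (congrFun h22 i) j
    simp only [Matrix.add_apply, Matrix.mul_apply, Matrix.of_apply, Fin.sum_univ_one,
      Matrix.vecMulVec_apply] at this ⊢
    linarith [this]
  have hQ : Q = A⁻¹ - q • Matrix.vecMulVec v v := by
    have h1 : Q * A * A⁻¹ = (1 + Matrix.vecMulVec qv l) * A⁻¹ := by rw [hQA]
    rw [Matrix.mul_assoc, hAinv', Matrix.mul_one, Matrix.add_mul, Matrix.one_mul] at h1
    rw [h1, hqv]
    have hvj : ∀ j, v j = ∑ k, l k * A⁻¹ k j := by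
      intro j
      rw [hv]
      simp only [Matrix.mulVec, dotProduct]
      exact Finset.sum_congr rfl fun k _ => by rw [hsymi j k, mul_comm]
    have h2 : Matrix.vecMulVec ((-q) • v) l * A⁻¹ = -(q • Matrix.vecMulVec v v) := by
      funext i j
      simp only [Matrix.mul_apply, Matrix.vecMulVec_apply, Pi.smul_apply, smul_eq_mul,
        Matrix.neg_apply, Matrix.smul_apply]
      trans (-q * v i * ∑ k, l k * A⁻¹ k j)
      · rw [Finset.mul_sum]
        exact Finset.sum_congr rfl fun k _ => by ring
      · rw [← hvj j]; ring
    rw [h2]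
    abel
  -- value of q
  have hvne : v ≠ 0 := by
    intro h0
    exact hl (by rw [← hAv, h0, Matrix.mulVec_zero])
  have hc : 0 < l ⬝ᵥ A⁻¹ *ᵥ l := hA.inv.dotProduct_mulVec_pos hl
  have hlv : (l ⬝ᵥ v) = l ⬝ᵥ A⁻¹ *ᵥ l := rfl
  have hqc : q * (l ⬝ᵥ v) = 1 := by
    have h0 : Q *ᵥ l = v - (q * (v ⬝ᵥ l)) • v := by
      rw [hQ, Matrix.sub_mulVec, Matrix.smul_mulVec, hW]
      funext i
      simp only [Pi.sub_apply, Pi.smul_apply, smul_eq_mul]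
      ring_nf
      rw [← hv]; ring
    rw [hQl] at h0
    obtain ⟨i, hi⟩ := Function.ne_iff.mp hvne
    have h1 := congrFun h0 i
    simp only [Pi.zero_apply, Pi.sub_apply, Pi.smul_apply, smul_eq_mul] at h1
    have h2 : v i * (1 - q * (v ⬝ᵥ l)) = 0 := by linear_combination -h1
    rcases mul_eq_zero.mp h2 with h | h
    · exact absurd h hi
    · rw [dotProduct_comm] at h; linarith
  have hq : q = 1 / (l ⬝ᵥ A⁻¹ *ᵥ l) := by
    rw [← hlv]
    field_simp
    exact (eq_div_iff (by rw [hlv]; exact hc.ne')).mpr hqc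
  -- scalar identity for Q quadratic form
  have hxQx : ∀ x y : Fin N → ℝ, x ⬝ᵥ Q *ᵥ y = x ⬝ᵥ A⁻¹ *ᵥ y - q * ((v ⬝ᵥ y) * (x ⬝ᵥ v)) := by
    intro x y
    rw [hQ, Matrix.sub_mulVec, dotProduct_sub, Matrix.smul_mulVec, hW,
      dotProduct_smul, smul_eq_mul, dotProduct_smul, smul_eq_mul]
  have hlAx : ∀ x : Fin N → ℝ, l ⬝ᵥ A⁻¹ *ᵥ x = v ⬝ᵥ x := by
    intro x
    rw [dotProduct_mulVec, ← Matrix.mulVec_transpose, hAis, ← hv]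
  refine ⟨hq, hQ, posSemidef_iff_dotProduct_mulVec.mpr ⟨?_, ?_⟩, ?_⟩
  · show Qᴴ = Q
    rw [hQ]
    funext i j
    simp only [Matrix.conjTranspose_apply, Matrix.sub_apply, Matrix.smul_apply,
      Matrix.vecMulVec_apply, smul_eq_mul, star_trivial]
    rw [hsymi j i]
    ring
  · intro x
    show (0:ℝ) ≤ star x ⬝ᵥ Q *ᵥ x
    have hsx : star x = x := funext fun i => star_trivial _
    rw [hsx, hxQx, dotProduct_comm x v]
    have hc0 : (l ⬝ᵥ v) ≠ 0 := hc.ne'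
    set t : ℝ := (v ⬝ᵥ x) / (l ⬝ᵥ v) with ht
    have htc : t * (l ⬝ᵥ v) = v ⬝ᵥ x := by rw [ht]; field_simp
    have key : 0 ≤ x ⬝ᵥ A⁻¹ *ᵥ x - t * (v ⬝ᵥ x) - t * (v ⬝ᵥ x) + t * t * (l ⬝ᵥ v) := by
      have h5 := hA.inv.posSemidef.dotProduct_mulVec_nonneg (x - t • l)
      have hst : star (x - t • l) = x - t • l := funext fun i => star_trivial _
      have hexp : (x - t • l) ⬝ᵥ A⁻¹ *ᵥ (x - t • l)
          = x ⬝ᵥ A⁻¹ *ᵥ x - t * (v ⬝ᵥ x) - t * (v ⬝ᵥ x) + t * t * (l ⬝ᵥ v) := by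
        simp only [Matrix.mulVec_sub, Matrix.mulVec_smul, dotProduct_sub, sub_dotProduct,
          dotProduct_smul, smul_dotProduct, smul_eq_mul]
        rw [hlAx x, ← hv, dotProduct_comm x v]
        ring
      rw [hst, hexp] at h5
      linarith [h5]
    have h6 : q * ((v ⬝ᵥ x) * (v ⬝ᵥ x)) = t * t * (l ⬝ᵥ v) := by
      rw [← htc]
      linear_combination (t * t * (l ⬝ᵥ v)) * hqc
    have h7 : t * (v ⬝ᵥ x) = t * t * (l ⬝ᵥ v) := by rw [← htc]; ring
    linarith [key, h6, h7]
  · intro φ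
    have hvAφ : v ⬝ᵥ (A *ᵥ φ) = l ⬝ᵥ φ := by
      rw [dotProduct_mulVec, ← Matrix.mulVec_transpose, hAs, hAv]
    have hAinvAφ : A⁻¹ *ᵥ (A *ᵥ φ) = φ := by
      rw [Matrix.mulVec_mulVec, hAinv, Matrix.one_mulVec]
    have hAφv : (A *ᵥ φ) ⬝ᵥ v = l ⬝ᵥ φ := by rw [dotProduct_comm]; exact hvAφ
    rw [hxQx, hAinvAφ, hvAφ, hAφv, dotProduct_comm]
    ring
end
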